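/- Let θ ∈ (0,1), c ∈ [0, θ/4], b ≥ 0, 0 < a < 1 − 2c − θ, and η^g, η^f ≥ 0. Fix x, g ∈ ℝⁿ and λ ∈ (0, λ̄_θ], where λ̄_θ = 2(1 − θ − a − 2c)/(L + 2b + 1). Put x(λ) = prox_{λh}(x − λg). Assume the gradient-inexactness condition ‖g − ∇f(x)‖² ≤ (η^g)² + (a²/λ² + b²)‖x(λ) − x‖², and that the inexact function values fₓ, f_λ ∈ ℝ satisfy |fₓ − f(x)| ≤ η^f + (c/λ)‖x(λ) − x‖² and |f_λ − f(x(λ))| ≤ η^f + (c/λ)‖x(λ) − x‖². Then the line-search condition f_λ + h(x(λ)) ≤ fₓ + h(x) − (θ/λ)‖x(λ) − x‖² + ν holds, where ν = Υ₁(λ)(η^g)² + 2η^f. -/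

import Mathlib

open RealInnerProductSpace
set_option maxHeartbeats 1000000

/-- `Υ₁(λ)`: the error-weighting constant from the paper. -/
noncomputable def Ups1 (a b lam : ℝ) : ℝ :=
  if a = 0 ∧ b = 0 then 1 / 2
  else if b = 0 then lam / (2 * a)
  else if a = 0 then 1 / (2 * b)
  else min (lam / (2 * a)) (1 / (2 * b))

/-- Descent lemma for `L`-Lipschitz gradients. -/
lemma descent_lemma {n : ℕ} (f : EuclideanSpace ℝ (Fin n) → ℝ) (hf : Differentiable ℝ f)
    (L : ℝ) (hL : 0 ≤ L)
    (hlip : ∀ u v : EuclideanSpace ℝ (Fin n),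
      ‖gradient f u - gradient f v‖ ≤ L * ‖u - v‖)
    (x p : EuclideanSpace ℝ (Fin n)) :
    f p ≤ f x + ⟪gradient f x, p - x⟫ + L / 2 * ‖p - x‖ ^ 2 := by
  set v := p - x with hv
  set G : ℝ → ℝ := fun t => ⟪gradient f (x + t • v), v⟫ with hG
  have hline : ∀ t : ℝ, HasDerivAt (fun s : ℝ => x + s • v) v t := fun t =>
    ((hasDerivAt_id t).smul_const v).const_add x |>.congr_deriv (one_smul ℝ v)
  have hderiv : ∀ t : ℝ, HasDerivAt (fun s : ℝ => f (x + s • v)) (G t) t := by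
    intro t
    have h1 : HasFDerivAt f (InnerProductSpace.toDual ℝ _ (gradient f (x + t • v))) (x + t • v) :=
      (hf _).hasGradientAt
    have := h1.comp_hasDerivAt t (hline t)
    simp only [InnerProductSpace.toDual_apply_apply] at this; exact this
  have hGcont : Continuous G := by
    have hgc : Continuous (gradient f) := by
      have : LipschitzWith (Real.toNNReal L) (gradient f) := by
        apply LipschitzWith.of_dist_le_mul
        intro u w
        simpa [dist_eq_norm, Real.coe_toNNReal L hL] using hlip u w
      exact this.continuous
    exact (hgc.comp (by continuity)).inner continuous_const
  have hint : IntervalIntegrable G MeasureTheory.volume 0 1 :=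
    hGcont.intervalIntegrable 0 1
  have heq : ∫ t in (0:ℝ)..1, G t = f p - f x := by
    have := intervalIntegral.integral_eq_sub_of_hasDerivAt
      (fun t _ => hderiv t) hint
    simpa [hv] using this
  have hmono : ∫ t in (0:ℝ)..1, G t ≤ ∫ t in (0:ℝ)..1, (G 0 + (L * ‖v‖ ^ 2) * t) := by
    apply intervalIntegral.integral_mono_on (by norm_num) hint
    · exact (by fun_prop : Continuous fun t : ℝ => G 0 + (L * ‖v‖ ^ 2) * t).intervalIntegrable 0 1
    · intro t ht
      have h1 : G t - G 0 = ⟪gradient f (x + t • v) - gradient f x, v⟫ := by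
        simp [hG, inner_sub_left]
      have h2 : ⟪gradient f (x + t • v) - gradient f x, v⟫ ≤
          ‖gradient f (x + t • v) - gradient f x‖ * ‖v‖ := real_inner_le_norm _ _
      have h3 : ‖gradient f (x + t • v) - gradient f x‖ ≤ L * (t * ‖v‖) := by
        have := hlip (x + t • v) x
        simpa [norm_smul, abs_of_nonneg ht.1] using this
      have h4 : ‖gradient f (x + t • v) - gradient f x‖ * ‖v‖ ≤ L * (t * ‖v‖) * ‖v‖ :=
        mul_le_mul_of_nonneg_right h3 (norm_nonneg v)
      nlinarith [norm_nonneg v]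
  have hrhs : ∫ t in (0:ℝ)..1, (G 0 + (L * ‖v‖ ^ 2) * t) = G 0 + L / 2 * ‖v‖ ^ 2 := by
    rw [intervalIntegral.integral_add (intervalIntegrable_const)
      ((by fun_prop : Continuous fun t : ℝ => (L * ‖v‖ ^ 2) * t).intervalIntegrable 0 1),
      intervalIntegral.integral_const_mul, integral_id, intervalIntegral.integral_const]
    simp; ring
  have hG0 : G 0 = ⟪gradient f x, p - x⟫ := by simp [hG, hv]
  nlinarith [heq ▸ (hmono.trans_eq hrhs)]

/-- Strong (with quadratic improvement) prox inequality. -/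
lemma strong_prox {n : ℕ} (h : EuclideanSpace ℝ (Fin n) → ℝ)
    (hconv : ConvexOn ℝ Set.univ h)
    (lam : ℝ) (hlam0 : 0 < lam)
    (p u x : EuclideanSpace ℝ (Fin n))
    (hmin : ∀ y, 1 / (2 * lam) * ‖p - u‖ ^ 2 + h p ≤ 1 / (2 * lam) * ‖y - u‖ ^ 2 + h y) :
    1 / (2 * lam) * ‖p - u‖ ^ 2 + h p + 1 / (2 * lam) * ‖x - p‖ ^ 2
      ≤ 1 / (2 * lam) * ‖x - u‖ ^ 2 + h x := by
  set α : ℝ := 1 / (2 * lam) with hαdef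
  have hα : 0 < α := by positivity
  set P := ‖p - u‖ ^ 2
  set X := ‖x - u‖ ^ 2
  set S := ‖p - x‖ ^ 2 with hSdef
  have hxp : ‖x - p‖ ^ 2 = S := by rw [hSdef, norm_sub_rev]
  rw [hxp]
  have hS0 : 0 ≤ S := by positivity
  have key : ∀ t : ℝ, 0 < t → t ≤ 1 →
      α * P + h p + (1 - t) * (α * S) ≤ α * X + h x := by
    intro t ht0 ht1
    set y := (1 - t) • p + t • x with hy
    have hhy : h y ≤ (1 - t) * h p + t * h x :=
      hconv.2 (Set.mem_univ p) (Set.mem_univ x) (by linarith) ht0.le (by ring)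
    have hny : ‖y - u‖ ^ 2 = (1 - t) * P + t * X - t * (1 - t) * S := by
      have hyu : y - u = (1 - t) • (p - u) + t • (x - u) := by
        rw [hy]; module
      have hpx : p - x = (p - u) - (x - u) := by abel
      rw [hyu, norm_add_sq_real, norm_smul, norm_smul, real_inner_smul_left,
        real_inner_smul_right, hSdef, hpx, norm_sub_sq_real]
      rw [Real.norm_eq_abs, Real.norm_eq_abs, abs_of_nonneg (by linarith : (0:ℝ) ≤ 1 - t),
        abs_of_nonneg ht0.le]
      ring
    have h1 := hmin y
    rw [hny] at h1
    have h2 : t * (α * P + h p + (1 - t) * (α * S)) ≤ t * (α * X + h x) := by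
      nlinarith [h1, hhy]
    exact le_of_mul_le_mul_left h2 ht0
  refine le_of_forall_pos_le_add ?_
  intro ε hε
  have ht0 : 0 < min 1 (ε / (α * S + 1)) := by
    apply lt_min one_pos; positivity
  have hk := key _ ht0 (min_le_left _ _)
  have hts : min 1 (ε / (α * S + 1)) * (α * S) ≤ ε := by
    have h1 : min 1 (ε / (α * S + 1)) ≤ ε / (α * S + 1) := min_le_right _ _
    have h2 : 0 ≤ α * S := by positivity
    have h3 := mul_le_mul_of_nonneg_right h1 h2
    calc min 1 (ε / (α * S + 1)) * (α * S) ≤ ε / (α * S + 1) * (α * S) := h3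
      _ ≤ ε := by
          rw [div_mul_eq_mul_div, div_le_iff₀ (by positivity)]
          nlinarith
  nlinarith [hk, hts]

/-- the first line-search condition holds for all `λ ∈ (0, λ̄_θ]`,
where `λ̄_θ = 2(1 - θ - a - 2c)/(L + 2b + 1)`. -/
theorem stmt3 {n : ℕ}
    (f h : EuclideanSpace ℝ (Fin n) → ℝ)
    (hconv : ConvexOn ℝ Set.univ h)
    (hf : Differentiable ℝ f)
    (L : ℝ) (hL : 0 < L)
    (hlip : ∀ u v : EuclideanSpace ℝ (Fin n),
      ‖gradient f u - gradient f v‖ ≤ L * ‖u - v‖)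
    (prox : ℝ → EuclideanSpace ℝ (Fin n) → EuclideanSpace ℝ (Fin n))
    (hprox : ∀ lam : ℝ, 0 < lam → ∀ u y : EuclideanSpace ℝ (Fin n),
      1 / (2 * lam) * ‖prox lam u - u‖ ^ 2 + h (prox lam u)
        ≤ 1 / (2 * lam) * ‖y - u‖ ^ 2 + h y)
    (θ c a b ηg ηf : ℝ)
    (hθ0 : 0 < θ) (hθ1 : θ < 1)
    (hc0 : 0 ≤ c) (hc1 : c ≤ θ / 4)
    (hb : 0 ≤ b)
    (ha0 : 0 < a) (ha1 : a < 1 - 2 * c - θ)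
    (hηg : 0 ≤ ηg) (hηf : 0 ≤ ηf)
    (lam : ℝ) (hlam0 : 0 < lam)
    (hlam1 : lam ≤ 2 * (1 - θ - a - 2 * c) / (L + 2 * b + 1))
    (x g : EuclideanSpace ℝ (Fin n))
    (xlam : EuclideanSpace ℝ (Fin n)) (hxlam : xlam = prox lam (x - lam • g))
    (hgrad : ‖g - gradient f x‖ ^ 2
      ≤ ηg ^ 2 + (a ^ 2 / lam ^ 2 + b ^ 2) * ‖xlam - x‖ ^ 2)
    (fx flam : ℝ)
    (hfx : |fx - f x| ≤ ηf + c / lam * ‖xlam - x‖ ^ 2)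
    (hflam : |flam - f xlam| ≤ ηf + c / lam * ‖xlam - x‖ ^ 2) :
    flam + h xlam ≤ fx + h x - θ / lam * ‖xlam - x‖ ^ 2
      + (Ups1 a b lam * ηg ^ 2 + 2 * ηf) := by
  set s := ‖xlam - x‖ ^ 2 with hs
  set t := ‖xlam - x‖ with ht
  have hts : t ^ 2 = s := rfl
  have ht0 : 0 ≤ t := norm_nonneg _
  have hs0 : 0 ≤ s := by positivity
  set e := ‖g - gradient f x‖ with he
  have he0 : 0 ≤ e := norm_nonneg _
  set U := Ups1 a b lam with hUdef
  -- properties of U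
  have haz : ¬(a = 0 ∧ b = 0) := fun hh => absurd hh.1 ha0.ne'
  have hUfacts : 0 < U ∧ U * (a ^ 2 / lam ^ 2 + b ^ 2) + 1 / (4 * U) ≤ a / lam + b := by
    rcases eq_or_lt_of_le hb with hb0 | hbpos
    · have hb0' : b = 0 := hb0.symm
      have hUeq : U = lam / (2 * a) := by
        rw [hUdef, Ups1, if_neg haz, if_pos hb0']
      constructor
      · rw [hUeq]; positivity
      · rw [hUeq, hb0']
        have : lam / (2 * a) * (a ^ 2 / lam ^ 2 + 0 ^ 2) + 1 / (4 * (lam / (2 * a)))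
            = a / lam := by
          field_simp; ring
        rw [this]; simp
    · have hbne : b ≠ 0 := hbpos.ne'
      have hUeq : U = min (lam / (2 * a)) (1 / (2 * b)) := by
        rw [hUdef, Ups1, if_neg haz, if_neg hbne, if_neg ha0.ne']
      constructor
      · rw [hUeq]; exact lt_min (by positivity) (by positivity)
      · rcases le_total (lam / (2 * a)) (1 / (2 * b)) with hm | hm
        · rw [hUeq, min_eq_left hm]
          have hba : lam * b ≤ a := by
            rw [div_le_div_iff₀ (by positivity) (by positivity)] at hm
            nlinarith
          have e1 : 1 / (4 * (lam / (2 * a))) = a / (2 * lam) := by field_simp; ring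
          have e2 : lam / (2 * a) * (a ^ 2 / lam ^ 2 + b ^ 2)
              = a / (2 * lam) + lam * b ^ 2 / (2 * a) := by field_simp
          rw [e1, e2]
          have e3 : lam * b ^ 2 / (2 * a) ≤ b / 2 := by
            rw [div_le_div_iff₀ (by positivity) two_pos]
            nlinarith
          have e4 : a / (2 * lam) + a / (2 * lam) = a / lam := by ring
          linarith
        · rw [hUeq, min_eq_right hm]
          have hab : a ≤ lam * b := by
            rw [div_le_div_iff₀ (by positivity) (by positivity)] at hm
            nlinarith
          have e1 : 1 / (4 * (1 / (2 * b))) = b / 2 := by field_simp; ring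
          have e2 : 1 / (2 * b) * (a ^ 2 / lam ^ 2 + b ^ 2)
              = a ^ 2 / (2 * b * lam ^ 2) + b / 2 := by field_simp
          rw [e1, e2]
          have e3 : a ^ 2 / (2 * b * lam ^ 2) ≤ a / lam := by
            rw [div_le_div_iff₀ (by positivity) hlam0]
            nlinarith [mul_le_mul_of_nonneg_left hab (mul_pos ha0 hlam0).le,
              mul_pos (mul_pos ha0 hlam0) (mul_pos hbpos hlam0)]
          linarith
  obtain ⟨hUpos, hcoef⟩ := hUfacts
  -- Young's inequality
  have h4U : 1 / (4 * U) * (4 * U) = 1 := by field_simp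
  have hyoung : e * t ≤ U * e ^ 2 + 1 / (4 * U) * t ^ 2 := by
    nlinarith [sq_nonneg (2 * U * e - t), hUpos, h4U, sq_nonneg t]
  -- key bound on the error inner product
  have hkey : e * t ≤ U * ηg ^ 2 + (a / lam + b) * s := by
    have h1 : U * e ^ 2 ≤ U * (ηg ^ 2 + (a ^ 2 / lam ^ 2 + b ^ 2) * s) :=
      mul_le_mul_of_nonneg_left hgrad hUpos.le
    have h2 : (U * (a ^ 2 / lam ^ 2 + b ^ 2) + 1 / (4 * U)) * s ≤ (a / lam + b) * s :=
      mul_le_mul_of_nonneg_right hcoef hs0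
    nlinarith [hyoung]
  -- descent lemma
  have hdes : f xlam ≤ f x + ⟪gradient f x, xlam - x⟫ + L / 2 * s :=
    descent_lemma f hf L hL.le hlip x xlam
  -- strong prox inequality, expanded
  have hsp := strong_prox h hconv lam hlam0 xlam (x - lam • g) x
    (fun y => by rw [hxlam]; exact hprox lam hlam0 (x - lam • g) y)
  have e1 : ‖xlam - (x - lam • g)‖ ^ 2
      = s + 2 * lam * ⟪xlam - x, g⟫ + lam ^ 2 * ‖g‖ ^ 2 := by
    have hrw : xlam - (x - lam • g) = (xlam - x) + lam • g := by abel
    rw [hrw, norm_add_sq_real, real_inner_smul_right, norm_smul, Real.norm_eq_abs,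
      abs_of_nonneg hlam0.le]
    ring
  have e2 : ‖x - (x - lam • g)‖ ^ 2 = lam ^ 2 * ‖g‖ ^ 2 := by
    have hrw : x - (x - lam • g) = lam • g := by abel
    rw [hrw, norm_smul, Real.norm_eq_abs, abs_of_nonneg hlam0.le]
    ring
  have e3 : ‖x - xlam‖ ^ 2 = s := by rw [hs, norm_sub_rev]
  rw [e1, e2, e3] at hsp
  have hsp' : 1 / lam * s + ⟪xlam - x, g⟫ + h xlam ≤ h x := by
    have ea : 1 / (2 * lam) * (s + 2 * lam * ⟪xlam - x, g⟫ + lam ^ 2 * ‖g‖ ^ 2)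
        = 1 / (2 * lam) * s + ⟪xlam - x, g⟫ + 1 / (2 * lam) * (lam ^ 2 * ‖g‖ ^ 2) := by
      field_simp
    have eb : 1 / (2 * lam) * s + 1 / (2 * lam) * s = 1 / lam * s := by
      field_simp; ring
    rw [ea] at hsp
    linarith
  -- Cauchy–Schwarz
  have hcs : ⟪gradient f x, xlam - x⟫ ≤ ⟪xlam - x, g⟫ + e * t := by
    have h1 : ⟪gradient f x - g, xlam - x⟫
        = ⟪gradient f x, xlam - x⟫ - ⟪g, xlam - x⟫ := inner_sub_left _ _ _
    have h2 : ⟪gradient f x - g, xlam - x⟫ ≤ ‖gradient f x - g‖ * ‖xlam - x‖ :=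
      real_inner_le_norm _ _
    have h3 : ‖gradient f x - g‖ = e := by rw [he, norm_sub_rev]
    have h4 : ⟪g, xlam - x⟫ = ⟪xlam - x, g⟫ := real_inner_comm _ _
    rw [h3, ← ht] at h2
    linarith
  -- function value bounds
  have hf1 : flam ≤ f xlam + (ηf + c / lam * s) := by
    have := abs_le.mp hflam; linarith [this.2]
  have hf2 : f x ≤ fx + (ηf + c / lam * s) := by
    have := abs_le.mp hfx; linarith [this.1]
  -- step size bound
  have hpos : (0:ℝ) < L + 2 * b + 1 := by linarith
  have hLB : (L / 2 + b) * lam ≤ 1 - θ - a - 2 * c := by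
    have h1 : lam * (L + 2 * b + 1) ≤ 2 * (1 - θ - a - 2 * c) :=
      (le_div_iff₀ hpos).mp hlam1
    linarith only [h1, hlam0]
  have hneg : L / 2 + b + (2 * c + a + θ - 1) / lam ≤ 0 := by
    have h9 : (2 * c + a + θ - 1) / lam ≤ -(L / 2 + b) := by
      rw [div_le_iff₀ hlam0]; linarith only [hLB]
    linarith only [h9]
  have hfin : (L / 2 + b + (2 * c + a + θ - 1) / lam) * s ≤ 0 :=
    mul_nonpos_of_nonpos_of_nonneg hneg hs0
  have hexp : (L / 2 + b + (2 * c + a + θ - 1) / lam) * s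
      = L / 2 * s + b * s + 2 * (c / lam * s) + a / lam * s + θ / lam * s - 1 / lam * s := by
    ring
  have hexp2 : (a / lam + b) * s = a / lam * s + b * s := by ring
  rw [hexp] at hfin
  set I1 : ℝ := ⟪gradient f x, xlam - x⟫ with hI1
  set I2 : ℝ := ⟪xlam - x, g⟫ with hI2
  clear_value s t e U I1 I2
  linarith only [hf1, hdes, hsp', hf2, hkey, hcs, hfin, hexp2]
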